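/- arXiv:0902.4290 — 5 statements merged into one kernel-verified Lean document; each statement's English description precedes it below -/
import Mathlib

section
/- The function H₁(φ,u,v,w,J₁,J₂,τ) = w − ((α₂−α₁)/h(τ))·v − (α₁α₂/(2 h(τ)²))·u² is a first integral of the limiting fast system φ' = u/h(τ), u' = v, v' = u·w, w' = (α₁α₂/h(τ)²)·u·v + ((α₂−α₁)/h(τ))·u·w, J₁' = 0, J₂' = 0, τ' = 0; i.e., along any C¹ solution of this ODE system the value of H₁ is constant. -/
/-- H₁ is a first integral of the limiting fast PNP system. -/
theorem stmt_2 (α₁ α₂ : ℝ) (hα₁ : 0 < α₁) (hα₂ : 0 < α₂)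
    (h : ℝ → ℝ) (hh : ContDiff ℝ 1 h) (hhpos : ∀ t, 0 < h t)
    (φ u v w J₁ J₂ τ : ℝ → ℝ)
    (hφ : ∀ ξ, HasDerivAt φ (u ξ / h (τ ξ)) ξ)
    (hu : ∀ ξ, HasDerivAt u (v ξ) ξ)
    (hv : ∀ ξ, HasDerivAt v (u ξ * w ξ) ξ)
    (hw : ∀ ξ, HasDerivAt w
      (α₁ * α₂ / (h (τ ξ)) ^ 2 * (u ξ * v ξ)
        + (α₂ - α₁) / h (τ ξ) * (u ξ * w ξ)) ξ)
    (hJ₁ : ∀ ξ, HasDerivAt J₁ 0 ξ)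
    (hJ₂ : ∀ ξ, HasDerivAt J₂ 0 ξ)
    (hτ : ∀ ξ, HasDerivAt τ 0 ξ) :
    ∀ ξ₁ ξ₂ : ℝ,
      w ξ₁ - (α₂ - α₁) / h (τ ξ₁) * v ξ₁
          - α₁ * α₂ / (2 * (h (τ ξ₁)) ^ 2) * (u ξ₁) ^ 2
        = w ξ₂ - (α₂ - α₁) / h (τ ξ₂) * v ξ₂
          - α₁ * α₂ / (2 * (h (τ ξ₂)) ^ 2) * (u ξ₂) ^ 2 := by
  set H : ℝ → ℝ := fun ξ =>
    w ξ - (α₂ - α₁) / h (τ ξ) * v ξ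
      - α₁ * α₂ / (2 * (h (τ ξ)) ^ 2) * (u ξ) ^ 2 with hH
  have hg : ∀ ξ, HasDerivAt (fun ξ => h (τ ξ)) 0 ξ := by
    intro ξ
    have := ((hh.differentiable one_ne_zero) (τ ξ)).hasDerivAt.comp ξ (hτ ξ)
    simp at this; exact this
  have hgne : ∀ ξ, h (τ ξ) ≠ 0 := fun ξ => (hhpos (τ ξ)).ne'
  have key : ∀ ξ, HasDerivAt H 0 ξ := by
    intro ξ
    have h1 : HasDerivAt (fun ξ => (α₂ - α₁) / h (τ ξ) * v ξ)
        ((0 * h (τ ξ) - (α₂ - α₁) * 0) / (h (τ ξ)) ^ 2 * v ξ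
          + (α₂ - α₁) / h (τ ξ) * (u ξ * w ξ)) ξ := by
      exact (((hasDerivAt_const ξ (α₂ - α₁)).div (hg ξ) (hgne ξ)).mul (hv ξ))
    have h2 : HasDerivAt (fun ξ => α₁ * α₂ / (2 * (h (τ ξ)) ^ 2) * (u ξ) ^ 2)
        ((0 * (2 * (h (τ ξ)) ^ 2) - α₁ * α₂ * ((0 : ℝ) * (h (τ ξ)) ^ 2 + 2 * (2 * h (τ ξ) ^ 1 * 0)))
            / (2 * (h (τ ξ)) ^ 2) ^ 2 * (u ξ) ^ 2
          + α₁ * α₂ / (2 * (h (τ ξ)) ^ 2) * (2 * u ξ ^ 1 * v ξ)) ξ := by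
      have hden : HasDerivAt (fun ξ => 2 * (h (τ ξ)) ^ 2)
          ((0 : ℝ) * (h (τ ξ)) ^ 2 + 2 * (2 * h (τ ξ) ^ 1 * 0)) ξ :=
        (hasDerivAt_const ξ (2 : ℝ)).mul ((hg ξ).pow 2)
      have hp := hhpos (τ ξ)
      have hdenne : 2 * (h (τ ξ)) ^ 2 ≠ 0 := by positivity
      exact ((hasDerivAt_const ξ (α₁ * α₂)).div hden hdenne).mul ((hu ξ).pow 2)
    have := ((hw ξ).sub h1).sub h2
    refine this.congr_deriv ?_
    ring
  intro ξ₁ ξ₂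
  have : ∀ ξ₁ ξ₂, H ξ₁ = H ξ₂ := by
    intro a b
    exact is_const_of_deriv_eq_zero (fun x => (key x).differentiableAt)
      (fun x => (key x).deriv) a b
  exact this ξ₁ ξ₂
end

section
/- The function H₂(φ,u,v,w,J₁,J₂,τ) = φ − (1/α₂)·log|α₁ v / h(τ) + w| is a first integral of the limiting fast system φ' = u/h(τ), u' = v, v' = u·w, w' = (α₁α₂/h(τ)²)·u·v + ((α₂−α₁)/h(τ))·u·w, J₁' = 0, J₂' = 0, τ' = 0, on the region where α₁ v / h(τ) + w ≠ 0. -/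
/-- H₂ is a first integral of the limiting fast PNP system. -/
theorem stmt_3 (α₁ α₂ : ℝ) (hα₁ : 0 < α₁) (hα₂ : 0 < α₂)
    (h : ℝ → ℝ) (hh : ContDiff ℝ 1 h) (hhpos : ∀ t, 0 < h t)
    (φ u v w J₁ J₂ τ : ℝ → ℝ)
    (hφ : ∀ ξ, HasDerivAt φ (u ξ / h (τ ξ)) ξ)
    (hu : ∀ ξ, HasDerivAt u (v ξ) ξ)
    (hv : ∀ ξ, HasDerivAt v (u ξ * w ξ) ξ)
    (hw : ∀ ξ, HasDerivAt w
      (α₁ * α₂ / (h (τ ξ)) ^ 2 * (u ξ * v ξ)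
        + (α₂ - α₁) / h (τ ξ) * (u ξ * w ξ)) ξ)
    (hJ₁ : ∀ ξ, HasDerivAt J₁ 0 ξ)
    (hJ₂ : ∀ ξ, HasDerivAt J₂ 0 ξ)
    (hτ : ∀ ξ, HasDerivAt τ 0 ξ)
    (hne : ∀ ξ, α₁ * v ξ / h (τ ξ) + w ξ ≠ 0) :
    ∀ ξ₁ ξ₂ : ℝ,
      φ ξ₁ - (1 / α₂) * Real.log |α₁ * v ξ₁ / h (τ ξ₁) + w ξ₁|
        = φ ξ₂ - (1 / α₂) * Real.log |α₁ * v ξ₂ / h (τ ξ₂) + w ξ₂| := by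
  -- τ is constant
  have hτc : ∀ ξ, τ ξ = τ 0 := by
    intro ξ
    have hconst : ∀ x y : ℝ, τ x = τ y := by
      intro x y
      have hd : Differentiable ℝ τ := fun x => (hτ x).differentiableAt
      have hz : ∀ x, deriv τ x = 0 := fun x => (hτ x).deriv
      have := is_const_of_deriv_eq_zero hd hz x y
      exact this
    exact hconst ξ 0
  set c : ℝ := h (τ 0) with hc
  have hcpos : 0 < c := hhpos _
  have hcne : c ≠ 0 := ne_of_gt hcpos
  have hhc : ∀ ξ, h (τ ξ) = c := fun ξ => by rw [hτc ξ]
  -- the function F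
  set F : ℝ → ℝ := fun ξ => α₁ * v ξ / c + w ξ with hF
  have hFne : ∀ ξ, F ξ ≠ 0 := by
    intro ξ
    have := hne ξ
    rwa [hhc ξ] at this
  have hFderiv : ∀ ξ, HasDerivAt F (α₂ * (u ξ / c) * F ξ) ξ := by
    intro ξ
    have h1 : HasDerivAt (fun ξ => α₁ * v ξ / c + w ξ)
        (α₁ * (u ξ * w ξ) / c +
          (α₁ * α₂ / (h (τ ξ)) ^ 2 * (u ξ * v ξ)
            + (α₂ - α₁) / h (τ ξ) * (u ξ * w ξ))) ξ := by
      exact (((hv ξ).const_mul α₁).div_const c).add (hw ξ)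
    convert h1 using 1
    rw [hhc ξ]
    field_simp [hF]
    simp only [hF]
    field_simp
    ring
  -- the conserved quantity
  set G : ℝ → ℝ := fun ξ => φ ξ - (1 / α₂) * Real.log (F ξ) with hG
  have hGderiv : ∀ ξ, HasDerivAt G 0 ξ := by
    intro ξ
    have hlog : HasDerivAt (fun ξ => Real.log (F ξ))
        (α₂ * (u ξ / c) * F ξ / F ξ) ξ := (hFderiv ξ).log (hFne ξ)
    have hφ' : HasDerivAt φ (u ξ / c) ξ := by
      have := hφ ξ; rwa [hhc ξ] at this
    have := hφ'.sub (hlog.const_mul (1 / α₂))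
    convert this using 1
    all_goals try rfl
    rw [mul_div_assoc, div_self (hFne ξ)]
    field_simp
    ring
  have hGconst : ∀ x y : ℝ, G x = G y := by
    intro x y
    exact is_const_of_deriv_eq_zero (fun x => (hGderiv x).differentiableAt)
      (fun x => (hGderiv x).deriv) x y
  intro ξ₁ ξ₂
  have key : ∀ ξ, φ ξ - (1 / α₂) * Real.log |α₁ * v ξ / h (τ ξ) + w ξ| = G ξ := by
    intro ξ
    rw [hG]
    simp only [hhc ξ, Real.log_abs]
    rfl
  rw [key ξ₁, key ξ₂, hGconst ξ₁ ξ₂]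
end

section
/- The function H₃(φ,u,v,w,J₁,J₂,τ) = φ + (1/α₁)·log|α₂ v / h(τ) − w| is a first integral of the limiting fast system φ' = u/h(τ), u' = v, v' = u·w, w' = (α₁α₂/h(τ)²)·u·v + ((α₂−α₁)/h(τ))·u·w, J₁' = 0, J₂' = 0, τ' = 0, on the region where α₂ v / h(τ) − w ≠ 0. -/
/-- H₃ is a first integral of the limiting fast PNP system. -/
theorem stmt_4 (α₁ α₂ : ℝ) (hα₁ : 0 < α₁) (hα₂ : 0 < α₂)
    (h : ℝ → ℝ) (hh : ContDiff ℝ 1 h) (hhpos : ∀ t, 0 < h t)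
    (φ u v w J₁ J₂ τ : ℝ → ℝ)
    (hφ : ∀ ξ, HasDerivAt φ (u ξ / h (τ ξ)) ξ)
    (hu : ∀ ξ, HasDerivAt u (v ξ) ξ)
    (hv : ∀ ξ, HasDerivAt v (u ξ * w ξ) ξ)
    (hw : ∀ ξ, HasDerivAt w
      (α₁ * α₂ / (h (τ ξ)) ^ 2 * (u ξ * v ξ)
        + (α₂ - α₁) / h (τ ξ) * (u ξ * w ξ)) ξ)
    (hJ₁ : ∀ ξ, HasDerivAt J₁ 0 ξ)
    (hJ₂ : ∀ ξ, HasDerivAt J₂ 0 ξ)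
    (hτ : ∀ ξ, HasDerivAt τ 0 ξ)
    (hne : ∀ ξ, α₂ * v ξ / h (τ ξ) - w ξ ≠ 0) :
    ∀ ξ₁ ξ₂ : ℝ,
      φ ξ₁ + (1 / α₁) * Real.log |α₂ * v ξ₁ / h (τ ξ₁) - w ξ₁|
        = φ ξ₂ + (1 / α₁) * Real.log |α₂ * v ξ₂ / h (τ ξ₂) - w ξ₂| := by
  -- τ is constant
  have hτc : ∀ ξ, τ ξ = τ 0 := by
    have := is_const_of_deriv_eq_zero (f := τ)
      (fun ξ => (hτ ξ).differentiableAt)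
      (fun ξ => (hτ ξ).deriv)
    intro ξ; exact this ξ 0
  set c : ℝ := h (τ 0) with hc
  have hcpos : 0 < c := hhpos _
  have hcne : c ≠ 0 := ne_of_gt hcpos
  have hhc : ∀ ξ, h (τ ξ) = c := fun ξ => by rw [hτc ξ]
  set g : ℝ → ℝ := fun ξ => α₂ * v ξ / c - w ξ with hgdef
  have hgne : ∀ ξ, g ξ ≠ 0 := fun ξ => by
    have := hne ξ; rwa [hhc ξ] at this
  have hg : ∀ ξ, HasDerivAt g (-α₁ * (u ξ / c) * g ξ) ξ := by
    intro ξ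
    have h1 : HasDerivAt g (α₂ * (u ξ * w ξ) / c -
        (α₁ * α₂ / (h (τ ξ)) ^ 2 * (u ξ * v ξ)
          + (α₂ - α₁) / h (τ ξ) * (u ξ * w ξ))) ξ :=
      (((hv ξ).const_mul α₂).div_const c).sub (hw ξ)
    convert h1 using 1
    rw [hhc ξ]
    simp only [hgdef]
    field_simp
    ring
  set F : ℝ → ℝ := fun ξ => φ ξ + (1 / α₁) * Real.log (g ξ) with hF
  have hF' : ∀ ξ, HasDerivAt F 0 ξ := by
    intro ξ
    have hlog : HasDerivAt (fun ξ => Real.log (g ξ))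
        (-α₁ * (u ξ / c) * g ξ / g ξ) ξ := (hg ξ).log (hgne ξ)
    have h2 : HasDerivAt (fun ξ => φ ξ + (1 / α₁) * Real.log (g ξ))
        (u ξ / h (τ ξ) + 1 / α₁ * (-α₁ * (u ξ / c) * g ξ / g ξ)) ξ :=
      (hφ ξ).add (hlog.const_mul (1 / α₁))
    convert h2 using 1
    rw [hhc ξ]
    field_simp [hgne ξ]
    ring
  have hFc : ∀ ξ₁ ξ₂, F ξ₁ = F ξ₂ := by
    have := is_const_of_deriv_eq_zero (f := F)
      (fun ξ => (hF' ξ).differentiableAt)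
      (fun ξ => (hF' ξ).deriv)
    intro ξ₁ ξ₂; exact this ξ₁ ξ₂
  intro ξ₁ ξ₂
  have e : ∀ ξ, φ ξ + (1 / α₁) * Real.log |α₂ * v ξ / h (τ ξ) - w ξ| = F ξ := by
    intro ξ
    rw [hhc ξ, Real.log_abs]
  rw [e ξ₁, e ξ₂, hFc ξ₁ ξ₂]
end

section
/- Suppose a C¹ solution (φ, u, v, w) of the limiting fast system with parameters fixed at τ ≡ 0 satisfies the initial conditions φ(0) = φ₀, v(0) = h(0)(α₂ l₂ − α₁ l₁), w(0) = α₁² l₁ + α₂² l₂, and converges as ξ → +∞ to an equilibrium (φ*, 0, 0, w*). Then w* = (α₁+α₂)(α₁ l₁)^{α₂/(α₁+α₂)} (α₂ l₂)^{α₁/(α₁+α₂)} and φ* = φ₀ + (1/(α₁+α₂)) log(α₁ l₁ / (α₂ l₂)). -/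
open Filter

/-- Limit of a left boundary-layer orbit of the limiting fast system (τ ≡ 0). -/
theorem stmt_7 (α₁ α₂ l₁ l₂ φ₀ h₀ φstar wstar : ℝ)
    (hα₁ : 0 < α₁) (hα₂ : 0 < α₂) (hl₁ : 0 < l₁) (hl₂ : 0 < l₂)
    (hh₀ : 0 < h₀)
    (φ u v w : ℝ → ℝ)
    (hφ : ∀ ξ, HasDerivAt φ (u ξ / h₀) ξ)
    (hu : ∀ ξ, HasDerivAt u (v ξ) ξ)
    (hv : ∀ ξ, HasDerivAt v (u ξ * w ξ) ξ)
    (hw : ∀ ξ, HasDerivAt w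
      (α₁ * α₂ / h₀ ^ 2 * (u ξ * v ξ) + (α₂ - α₁) / h₀ * (u ξ * w ξ)) ξ)
    (hφ0 : φ 0 = φ₀)
    (hv0 : v 0 = h₀ * (α₂ * l₂ - α₁ * l₁))
    (hw0 : w 0 = α₁ ^ 2 * l₁ + α₂ ^ 2 * l₂)
    (hwpos : ∀ ξ, 0 < w ξ)
    (hpos1 : ∀ ξ, 0 < α₁ * v ξ / h₀ + w ξ)
    (hpos2 : ∀ ξ, 0 < w ξ - α₂ * v ξ / h₀)
    (hφlim : Tendsto φ atTop (nhds φstar))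
    (hulim : Tendsto u atTop (nhds 0))
    (hvlim : Tendsto v atTop (nhds 0))
    (hwlim : Tendsto w atTop (nhds wstar)) :
    wstar = (α₁ + α₂) * (α₁ * l₁) ^ (α₂ / (α₁ + α₂)) * (α₂ * l₂) ^ (α₁ / (α₁ + α₂)) ∧
    φstar = φ₀ + (1 / (α₁ + α₂)) * Real.log (α₁ * l₁ / (α₂ * l₂)) := by
  have hh₀' : h₀ ≠ 0 := ne_of_gt hh₀
  have hspos : 0 < α₁ + α₂ := by positivity
  set F₂ : ℝ → ℝ := fun ξ => (α₁ * v ξ / h₀ + w ξ) * Real.exp (-α₂ * φ ξ) with hF₂def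
  have hF₂' : ∀ ξ, HasDerivAt F₂ 0 ξ := by
    intro ξ
    have hP : HasDerivAt (fun ξ => α₁ * v ξ / h₀ + w ξ)
        (α₁ * (u ξ * w ξ) / h₀ +
          (α₁ * α₂ / h₀ ^ 2 * (u ξ * v ξ) + (α₂ - α₁) / h₀ * (u ξ * w ξ))) ξ :=
      (((hv ξ).const_mul α₁).div_const h₀).add (hw ξ)
    have hE : HasDerivAt (fun ξ => Real.exp (-α₂ * φ ξ))
        (Real.exp (-α₂ * φ ξ) * (-α₂ * (u ξ / h₀))) ξ := ((hφ ξ).const_mul (-α₂)).exp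
    have := hP.mul hE
    exact this.congr_deriv (by ring)
  have hF₂const : ∀ ξ, F₂ ξ = F₂ 0 := fun ξ =>
    is_const_of_deriv_eq_zero (fun x => (hF₂' x).differentiableAt)
      (fun x => (hF₂' x).deriv) ξ 0
  set F₃ : ℝ → ℝ := fun ξ => (w ξ - α₂ * v ξ / h₀) * Real.exp (α₁ * φ ξ) with hF₃def
  have hF₃' : ∀ ξ, HasDerivAt F₃ 0 ξ := by
    intro ξ
    have hP : HasDerivAt (fun ξ => w ξ - α₂ * v ξ / h₀)
        ((α₁ * α₂ / h₀ ^ 2 * (u ξ * v ξ) + (α₂ - α₁) / h₀ * (u ξ * w ξ)) -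
          α₂ * (u ξ * w ξ) / h₀) ξ :=
      (hw ξ).sub (((hv ξ).const_mul α₂).div_const h₀)
    have hE : HasDerivAt (fun ξ => Real.exp (α₁ * φ ξ))
        (Real.exp (α₁ * φ ξ) * (α₁ * (u ξ / h₀))) ξ := ((hφ ξ).const_mul α₁).exp
    have := hP.mul hE
    exact this.congr_deriv (by ring)
  have hF₃const : ∀ ξ, F₃ ξ = F₃ 0 := fun ξ =>
    is_const_of_deriv_eq_zero (fun x => (hF₃' x).differentiableAt)
      (fun x => (hF₃' x).deriv) ξ 0
  have hF₂0 : F₂ 0 = α₂ * (α₁ + α₂) * l₂ * Real.exp (-α₂ * φ₀) := by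
    simp only [hF₂def, hφ0, hv0, hw0]
    field_simp
    ring
  have hF₃0 : F₃ 0 = α₁ * (α₁ + α₂) * l₁ * Real.exp (α₁ * φ₀) := by
    simp only [hF₃def, hφ0, hv0, hw0]
    field_simp
    ring
  have hPlim : Tendsto (fun ξ => α₁ * v ξ / h₀ + w ξ) atTop (nhds wstar) := by
    have := (((hvlim.const_mul α₁).div_const h₀).add hwlim)
    simpa using this
  have hQlim : Tendsto (fun ξ => w ξ - α₂ * v ξ / h₀) atTop (nhds wstar) := by
    have := hwlim.sub ((hvlim.const_mul α₂).div_const h₀)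
    simpa using this
  have hPeq : ∀ ξ, α₁ * v ξ / h₀ + w ξ = F₂ 0 * Real.exp (α₂ * φ ξ) := by
    intro ξ
    rw [← hF₂const ξ]
    simp only [hF₂def]
    rw [show (-α₂ * φ ξ) = -(α₂ * φ ξ) by ring, Real.exp_neg]
    field_simp
  have hQeq : ∀ ξ, w ξ - α₂ * v ξ / h₀ = F₃ 0 * Real.exp (-(α₁ * φ ξ)) := by
    intro ξ
    rw [← hF₃const ξ]
    simp only [hF₃def]
    rw [Real.exp_neg]
    field_simp
  have heq1 : wstar = F₂ 0 * Real.exp (α₂ * φstar) := by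
    refine tendsto_nhds_unique hPlim ?_
    simp_rw [hPeq]
    exact ((Real.continuous_exp.tendsto _).comp (hφlim.const_mul α₂)).const_mul _
  have heq2 : wstar = F₃ 0 * Real.exp (-(α₁ * φstar)) := by
    refine tendsto_nhds_unique hQlim ?_
    simp_rw [hQeq]
    exact ((Real.continuous_exp.tendsto _).comp ((hφlim.const_mul α₁).neg)).const_mul _
  rw [hF₂0] at heq1
  rw [hF₃0] at heq2
  have heq1' : wstar = α₂ * (α₁ + α₂) * l₂ * Real.exp (α₂ * (φstar - φ₀)) := by
    rw [heq1, mul_assoc, ← Real.exp_add]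
    congr 2
    ring
  have heq2' : wstar = α₁ * (α₁ + α₂) * l₁ * Real.exp (-(α₁ * (φstar - φ₀))) := by
    rw [heq2, mul_assoc, ← Real.exp_add]
    congr 2
    ring
  have hR : (0:ℝ) < α₁ * l₁ / (α₂ * l₂) := by positivity
  have h3 : α₂ * (α₁ + α₂) * l₂ * Real.exp ((α₁ + α₂) * (φstar - φ₀)) =
      α₁ * (α₁ + α₂) * l₁ := by
    have h := heq1'.symm.trans heq2'
    have e2 : Real.exp (-(α₁ * (φstar - φ₀))) * Real.exp (α₁ * (φstar - φ₀)) = 1 := by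
      rw [← Real.exp_add]; simp
    have e : Real.exp (α₂ * (φstar - φ₀)) * Real.exp (α₁ * (φstar - φ₀)) =
        Real.exp ((α₁ + α₂) * (φstar - φ₀)) := by
      rw [← Real.exp_add]; congr 1; ring
    linear_combination Real.exp (α₁ * (φstar - φ₀)) * h - α₂ * (α₁ + α₂) * l₂ * e +
      α₁ * (α₁ + α₂) * l₁ * e2
  have hexp : Real.exp ((α₁ + α₂) * (φstar - φ₀)) = α₁ * l₁ / (α₂ * l₂) := by
    rw [eq_div_iff (by positivity : (α₂ * l₂ : ℝ) ≠ 0)]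
    nlinarith [h3, hspos, Real.exp_pos ((α₁ + α₂) * (φstar - φ₀))]
  have hlog := congrArg Real.log hexp
  rw [Real.log_exp] at hlog
  have htval : φstar - φ₀ = (1 / (α₁ + α₂)) * Real.log (α₁ * l₁ / (α₂ * l₂)) := by
    rw [← hlog]; field_simp
  constructor
  · rw [heq2', htval]
    have hA0 : (0:ℝ) ≤ α₁ * l₁ := by positivity
    have hB0 : (0:ℝ) ≤ α₂ * l₂ := by positivity
    have key : Real.exp (-(α₁ * (1 / (α₁ + α₂) * Real.log (α₁ * l₁ / (α₂ * l₂))))) =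
        (α₁ * l₁) ^ (-(α₁ / (α₁ + α₂))) * (α₂ * l₂) ^ (α₁ / (α₁ + α₂)) := by
      have h1 : Real.exp (-(α₁ * (1 / (α₁ + α₂) * Real.log (α₁ * l₁ / (α₂ * l₂))))) =
          (α₁ * l₁ / (α₂ * l₂)) ^ (-(α₁ / (α₁ + α₂))) := by
        rw [Real.rpow_def_of_pos hR]
        congr 1
        ring
      rw [h1, Real.div_rpow hA0 hB0, Real.rpow_neg hB0, div_eq_mul_inv, inv_inv]
    have e1 : (α₁ * l₁ : ℝ) ^ (α₂ / (α₁ + α₂)) =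
        (α₁ * l₁) * (α₁ * l₁) ^ (-(α₁ / (α₁ + α₂))) := by
      rw [show α₂ / (α₁ + α₂) = 1 + -(α₁ / (α₁ + α₂)) by field_simp; ring,
        Real.rpow_add (by positivity), Real.rpow_one]
    rw [key, e1]
    ring
  · rw [show φstar = φ₀ + (φstar - φ₀) by ring, htval]
end

section
/- Let f : ℝⁿ → ℝⁿ be a C¹ vector field, ψ : ℝⁿ → ℝⁿ a C² diffeomorphism with Jacobian J(q) and d(q) = (det J(q))⁻¹, and suppose Σⱼ ∂/∂qⱼ ( d(q) ∂qⱼ/∂pᵢ ) = 0 for all i = 1,…,n. Define F(p) = f(ψ(p)). Then div_p F(p) = (1/d(q)) · div_q ( d(q) J(q) f(q) ) evaluated at q = ψ(p). -/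
open scoped BigOperators

/-- Divergence of a vector field on ℝⁿ (in coordinates). -/
noncomputable def divg {n : ℕ} (F : (Fin n → ℝ) → (Fin n → ℝ))
    (p : Fin n → ℝ) : ℝ :=
  ∑ i, fderiv ℝ F p (Pi.single i 1) i

/-- Jacobian matrix J(q) = Dψ(ψ⁻¹(q)) in coordinates: J(q)ⱼᵢ = ∂qⱼ/∂pᵢ. -/
noncomputable def jacMat {n : ℕ} (ψ ψinv : (Fin n → ℝ) → (Fin n → ℝ))
    (q : Fin n → ℝ) : Matrix (Fin n) (Fin n) ℝ :=
  fun j i => fderiv ℝ ψ (ψinv q) (Pi.single i 1) j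

/-- extracting a coordinate from a Fréchet derivative of a ℝⁿ-valued map. -/
lemma fderiv_coord {n : ℕ} {F : (Fin n → ℝ) → (Fin n → ℝ)} {x : Fin n → ℝ}
    (h : DifferentiableAt ℝ F x) (v : Fin n → ℝ) (i : Fin n) :
    fderiv ℝ (fun y => F y i) x v = fderiv ℝ F x v i := by
  have h' : ∀ j, DifferentiableAt ℝ (fun y => F y j) x := differentiableAt_pi.1 h
  have : fderiv ℝ F x = ContinuousLinearMap.pi fun j => fderiv ℝ (fun y => F y j) x :=
    fderiv_pi h'
  rw [this]
  rfl

/-- a continuous linear map on ℝⁿ applied to a vector, as a sum over basis vectors. -/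
lemma clm_apply_sum {n : ℕ} {E : Type*} [NormedAddCommGroup E] [NormedSpace ℝ E]
    (L : (Fin n → ℝ) →L[ℝ] E) (v : Fin n → ℝ) :
    L v = ∑ j, v j • L (Pi.single j 1) := by
  have hv : v = ∑ j, v j • (Pi.single j 1 : Fin n → ℝ) := by
    ext k
    simp [Pi.single_apply, Finset.sum_apply]
  conv_lhs => rw [hv]
  rw [map_sum]
  simp

/-- Divergence transformation law of Lemma 2.1:
if the rows of d·J are divergence-free, then
div_p F(p) = (1/d(q)) div_q(d(q) J(q) f(q)) at q = ψ(p), where F = f ∘ ψ. -/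
theorem stmt_18 (n : ℕ)
    (ψ ψinv : (Fin n → ℝ) → (Fin n → ℝ))
    (hψ : ContDiff ℝ 2 ψ) (hψinv : ContDiff ℝ 2 ψinv)
    (hleft : Function.LeftInverse ψinv ψ)
    (hright : Function.RightInverse ψinv ψ)
    (f : (Fin n → ℝ) → (Fin n → ℝ)) (hf : ContDiff ℝ 1 f)
    (d : (Fin n → ℝ) → ℝ)
    (hd : ∀ q, d q = ((jacMat ψ ψinv q).det)⁻¹)
    (hdne : ∀ q, (jacMat ψ ψinv q).det ≠ 0)
    (hdivfree : ∀ i (q : Fin n → ℝ),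
      ∑ j, fderiv ℝ (fun q' => d q' * jacMat ψ ψinv q' j i) q (Pi.single j 1) = 0) :
    ∀ p, divg (fun p' => f (ψ p')) p =
      (d (ψ p))⁻¹ *
        divg (fun q i => d q * ((jacMat ψ ψinv q).mulVec (f q)) i) (ψ p) := by
  classical
  -- basic differentiability facts
  have hψd : Differentiable ℝ ψ := hψ.differentiable (by norm_num)
  have hfd : Differentiable ℝ f := hf.differentiable (by norm_num)
  have hfi : ∀ i, Differentiable ℝ (fun q' => f q' i) := fun i =>
    differentiable_pi.1 hfd i
  -- the Jacobian entries are differentiable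
  have hA : ContDiff ℝ 1 (fun q' => fderiv ℝ ψ (ψinv q')) :=
    (hψ.fderiv_right (by norm_num)).comp (hψinv.of_le (by norm_num))
  have hJ : ∀ j i, Differentiable ℝ (fun q' => jacMat ψ ψinv q' j i) := by
    intro j i
    have h1 : Differentiable ℝ (fun q' => fderiv ℝ ψ (ψinv q') (Pi.single i 1)) :=
      (hA.differentiable (by norm_num)).clm_apply (differentiable_const _)
    exact differentiable_pi.1 h1 j
  -- the determinant is differentiable
  have hdet : Differentiable ℝ (fun q' => (jacMat ψ ψinv q').det) := by
    have : (fun q' => (jacMat ψ ψinv q').det)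
        = fun q' => ∑ σ : Equiv.Perm (Fin n),
            (Equiv.Perm.sign σ : ℝ) * ∏ i, jacMat ψ ψinv q' (σ i) i := by
      funext q'
      rw [Matrix.det_apply]
      congr 1
      funext σ
      simp [Units.smul_def, zsmul_eq_mul]
    rw [this]
    refine Differentiable.fun_sum (fun σ _ => Differentiable.const_mul ?_ _)
    intro x
    exact (HasFDerivAt.finset_prod (fun i _ => ((hJ (σ i) i) x).hasFDerivAt)).differentiableAt
  have hdd : Differentiable ℝ d := by
    have : d = fun q' => ((jacMat ψ ψinv q').det)⁻¹ := funext hd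
    rw [this]
    exact hdet.inv hdne
  have hdJ : ∀ j i, Differentiable ℝ (fun q' => d q' * jacMat ψ ψinv q' j i) :=
    fun j i => hdd.mul (hJ j i)
  have hterm : ∀ j i, Differentiable ℝ
      (fun q' => d q' * jacMat ψ ψinv q' j i * f q' i) :=
    fun j i => (hdJ j i).mul (hfi i)
  intro p
  have hq : ψinv (ψ p) = p := hleft p
  set q : Fin n → ℝ := ψ p with hqdef
  -- the common quantity
  set S : ℝ := ∑ j, ∑ i, jacMat ψ ψinv q j i * fderiv ℝ f q (Pi.single j 1) i with hS
  -- LHS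
  have hJp : ∀ j i, jacMat ψ ψinv q j i = fderiv ℝ ψ p (Pi.single i 1) j := by
    intro j i; rw [jacMat, hqdef, hq]
  have hLHS : divg (fun p' => f (ψ p')) p = S := by
    have hcomp : fderiv ℝ (fun p' => f (ψ p')) p
        = (fderiv ℝ f q).comp (fderiv ℝ ψ p) := fderiv_comp p (hfd q) (hψd p)
    rw [divg, hcomp, hS]
    rw [Finset.sum_comm]
    refine Finset.sum_congr rfl (fun i _ => ?_)
    rw [ContinuousLinearMap.comp_apply, clm_apply_sum (fderiv ℝ f q)]
    rw [Finset.sum_apply]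
    refine Finset.sum_congr rfl (fun j _ => ?_)
    rw [Pi.smul_apply, smul_eq_mul, hJp j i]
  -- RHS: component functions
  have hGcomp : ∀ j : Fin n, (fun q' => d q' * ((jacMat ψ ψinv q').mulVec (f q')) j)
      = fun q' => ∑ i, d q' * jacMat ψ ψinv q' j i * f q' i := by
    intro j
    funext q'
    rw [Matrix.mulVec, dotProduct, Finset.mul_sum]
    exact Finset.sum_congr rfl (fun i _ => by ring)
  have hGj : ∀ (j : Fin n), Differentiable ℝ
      (fun q' => d q' * ((jacMat ψ ψinv q').mulVec (f q')) j) := by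
    intro j
    rw [hGcomp j]
    exact Differentiable.fun_sum (fun i _ => hterm j i)
  have hG : DifferentiableAt ℝ
      (fun q' i => d q' * ((jacMat ψ ψinv q').mulVec (f q')) i) q :=
    differentiableAt_pi.2 (fun j => hGj j q)
  -- compute the divergence of the RHS vector field
  have hdivG : divg (fun q' i => d q' * ((jacMat ψ ψinv q').mulVec (f q')) i) q
      = d q * S := by
    rw [divg]
    have step1 : ∀ j : Fin n,
        fderiv ℝ (fun q' i => d q' * ((jacMat ψ ψinv q').mulVec (f q')) i) q
          (Pi.single j 1) j
        = ∑ i, (d q * jacMat ψ ψinv q j i * fderiv ℝ (fun q' => f q' i) q (Pi.single j 1)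
            + f q i * fderiv ℝ (fun q' => d q' * jacMat ψ ψinv q' j i) q (Pi.single j 1)) := by
      intro j
      rw [← fderiv_coord hG (Pi.single j 1) j, hGcomp j]
      rw [fderiv_fun_sum (fun i _ => (hterm j i) q)]
      rw [ContinuousLinearMap.sum_apply]
      refine Finset.sum_congr rfl (fun i _ => ?_)
      rw [fderiv_fun_mul ((hdJ j i) q) ((hfi i) q)]
      simp [mul_comm]
    calc ∑ j, fderiv ℝ (fun q' i => d q' * ((jacMat ψ ψinv q').mulVec (f q')) i) q
          (Pi.single j 1) j
        = ∑ j, ∑ i, (d q * jacMat ψ ψinv q j i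
              * fderiv ℝ (fun q' => f q' i) q (Pi.single j 1)
            + f q i * fderiv ℝ (fun q' => d q' * jacMat ψ ψinv q' j i) q (Pi.single j 1)) := by
          exact Finset.sum_congr rfl (fun j _ => step1 j)
      _ = (∑ j, ∑ i, d q * jacMat ψ ψinv q j i
              * fderiv ℝ (fun q' => f q' i) q (Pi.single j 1))
          + ∑ j, ∑ i, f q i
              * fderiv ℝ (fun q' => d q' * jacMat ψ ψinv q' j i) q (Pi.single j 1) := by
          rw [← Finset.sum_add_distrib]
          exact Finset.sum_congr rfl (fun j _ => Finset.sum_add_distrib)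
      _ = (∑ j, ∑ i, d q * jacMat ψ ψinv q j i
              * fderiv ℝ (fun q' => f q' i) q (Pi.single j 1)) + 0 := by
          congr 1
          rw [Finset.sum_comm]
          refine Finset.sum_eq_zero (fun i _ => ?_)
          rw [← Finset.mul_sum, hdivfree i q, mul_zero]
      _ = d q * S := by
          rw [add_zero, hS, Finset.mul_sum]
          refine Finset.sum_congr rfl (fun j _ => ?_)
          rw [Finset.mul_sum]
          refine Finset.sum_congr rfl (fun i _ => ?_)
          rw [fderiv_coord (hfd q) (Pi.single j 1) i]
          ring
  rw [hLHS, hdivG]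
  have hdne' : d q ≠ 0 := by rw [hd q]; exact inv_ne_zero (hdne q)
  field_simp
end
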